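/- In a finite-horizon MDP, the difference in expected return J(π) − J_surr(π) between the true objective and the surrogate objective obtained by evaluating π's trajectory log-likelihood under π_old's state distribution is bounded in magnitude by 4T(T−1)εα², where α = max_s D_TV(π(·|s), π_old(·|s)) and ε is the maximum absolute advantage, for rewards bounded in [0,1]. -/

import Mathlib

variable {S A : Type}

/-- Finite-horizon undiscounted value function `V_π(s, h)` (`h` steps remaining) in an
MDP with transition kernel `P` and reward `r`. -/
noncomputable def valueFn [Fintype S] [Fintype A]
    (P : S → A → S → ℝ) (r : S → A → ℝ) (π : S → A → ℝ) : ℕ → S → ℝ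
  | 0, _ => 0
  | h + 1, s => ∑ a, π s a * (r s a + ∑ s', P s a s' * valueFn P r π h s')

/-- Advantage `A_π(s, a)` with `h+1` steps remaining. -/
noncomputable def advFn [Fintype S] [Fintype A]
    (P : S → A → S → ℝ) (r : S → A → ℝ) (π : S → A → ℝ) (h : ℕ) (s : S) (a : A) : ℝ :=
  r s a + (∑ s', P s a s' * valueFn P r π h s') - valueFn P r π (h + 1) s

/-- State distribution at time `t` under policy `π` from initial distribution `ρ`. -/
noncomputable def stateDist [Fintype S] [Fintype A]
    (P : S → A → S → ℝ) (ρ : S → ℝ) (π : S → A → ℝ) : ℕ → S → ℝ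
  | 0, s => ρ s
  | t + 1, s' => ∑ s, ∑ a, stateDist P ρ π t s * π s a * P s a s'

/-- Expected return `J(π)` over horizon `T`. -/
noncomputable def expReturn [Fintype S] [Fintype A]
    (P : S → A → S → ℝ) (r : S → A → ℝ) (ρ : S → ℝ) (T : ℕ) (π : S → A → ℝ) : ℝ :=
  ∑ s, ρ s * valueFn P r π T s

/-- Total variation distance between pmfs on a finite set. -/
noncomputable def tvDist {A : Type} [Fintype A] (p q : A → ℝ) : ℝ :=
  (1 / 2) * ∑ a, |p a - q a|

section Aux
variable [Fintype S] [Fintype A]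

lemma stateDist_nonneg (P : S → A → S → ℝ) (ρ : S → ℝ) (π : S → A → ℝ)
    (hP : ∀ s a s', 0 ≤ P s a s') (hρ : ∀ s, 0 ≤ ρ s) (hπ : ∀ s a, 0 ≤ π s a) :
    ∀ t s, 0 ≤ stateDist P ρ π t s := by
  intro t
  induction t with
  | zero => exact hρ
  | succ t ih =>
    intro s'
    simp only [stateDist]
    exact Finset.sum_nonneg fun s _ => Finset.sum_nonneg fun a _ =>
      mul_nonneg (mul_nonneg (ih s) (hπ s a)) (hP s a s')

lemma stateDist_sum_one (P : S → A → S → ℝ) (ρ : S → ℝ) (π : S → A → ℝ)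
    (hP : ∀ s a, ∑ s', P s a s' = 1) (hρ : ∑ s, ρ s = 1) (hπ : ∀ s, ∑ a, π s a = 1) :
    ∀ t, ∑ s, stateDist P ρ π t s = 1 := by
  intro t
  induction t with
  | zero => exact hρ
  | succ t ih =>
    simp only [stateDist]
    rw [Finset.sum_comm]
    have : ∀ s, ∑ s', ∑ a, stateDist P ρ π t s * π s a * P s a s'
        = stateDist P ρ π t s := by
      intro s
      rw [Finset.sum_comm]
      have h2 : ∀ a, ∑ s', stateDist P ρ π t s * π s a * P s a s'
          = stateDist P ρ π t s * π s a := by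
        intro a
        rw [← Finset.mul_sum, hP s a, mul_one]
      rw [Finset.sum_congr rfl fun a _ => h2 a, ← Finset.mul_sum, hπ s, mul_one]
    rw [Finset.sum_congr rfl fun s _ => this s, ih]

lemma stateDist_shift (P : S → A → S → ℝ) (ρ : S → ℝ) (π : S → A → ℝ) :
    ∀ t s', stateDist P ρ π (t + 1) s'
      = stateDist P (fun s'' => ∑ s, ∑ a, ρ s * π s a * P s a s'') π t s' := by
  intro t
  induction t with
  | zero => intro s'; simp [stateDist]
  | succ t ih =>
    intro s'
    show ∑ s, ∑ a, stateDist P ρ π (t + 1) s * π s a * P s a s' = _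
    rw [show stateDist P (fun s'' => ∑ s, ∑ a, ρ s * π s a * P s a s'') π (t+1) s'
        = ∑ s, ∑ a, stateDist P (fun s'' => ∑ s, ∑ a, ρ s * π s a * P s a s'') π t s * π s a * P s a s' from rfl]
    exact Finset.sum_congr rfl fun s _ => Finset.sum_congr rfl fun a _ => by rw [ih]


lemma push_exp (P : S → A → S → ℝ) (d : S → ℝ) (π : S → A → ℝ) (f : S → ℝ) :
    ∑ s', (∑ s, ∑ a, d s * π s a * P s a s') * f s'
      = ∑ s, ∑ a, d s * π s a * ∑ s', P s a s' * f s' := by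
  simp_rw [Finset.sum_mul, Finset.mul_sum]
  rw [Finset.sum_comm]
  refine Finset.sum_congr rfl fun s _ => ?_
  rw [Finset.sum_comm]
  refine Finset.sum_congr rfl fun a _ => Finset.sum_congr rfl fun s' _ => by ring

/-- expectation of advantage under own policy is zero -/
lemma adv_self_zero (P : S → A → S → ℝ) (r : S → A → ℝ) (πold : S → A → ℝ)
    (hπold : ∀ s, ∑ a, πold s a = 1) (h : ℕ) (s : S) :
    ∑ a, πold s a * advFn P r πold h s a = 0 := by
  simp only [advFn, mul_sub, mul_add]
  rw [Finset.sum_sub_distrib, ← Finset.sum_mul, hπold s, one_mul]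
  rw [show valueFn P r πold (h+1) s = ∑ a, πold s a * (r s a + ∑ s', P s a s' * valueFn P r πold h s') from rfl]
  rw [sub_eq_zero]
  exact Finset.sum_congr rfl fun a _ => by ring

/-- expanded value recursion against a distribution -/
lemma dist_value_succ (P : S → A → S → ℝ) (r : S → A → ℝ) (π : S → A → ℝ)
    (d : S → ℝ) (h : ℕ) :
    ∑ s, d s * valueFn P r π (h + 1) s
      = (∑ s, ∑ a, d s * π s a * r s a)
        + ∑ s, ∑ a, d s * π s a * ∑ s', P s a s' * valueFn P r π h s' := by
  rw [← Finset.sum_add_distrib]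
  refine Finset.sum_congr rfl fun s _ => ?_
  rw [show valueFn P r π (h+1) s = ∑ a, π s a * (r s a + ∑ s', P s a s' * valueFn P r π h s') from rfl]
  rw [Finset.mul_sum, ← Finset.sum_add_distrib]
  exact Finset.sum_congr rfl fun a _ => by ring

/-- expanded advantage expectation -/
lemma dist_adv_exp (P : S → A → S → ℝ) (r : S → A → ℝ) (π πold : S → A → ℝ)
    (hπ : ∀ s, ∑ a, π s a = 1) (d : S → ℝ) (h : ℕ) :
    ∑ s, d s * ∑ a, π s a * advFn P r πold h s a
      = (∑ s, ∑ a, d s * π s a * r s a)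
        + (∑ s, ∑ a, d s * π s a * ∑ s', P s a s' * valueFn P r πold h s')
        - ∑ s, d s * valueFn P r πold (h + 1) s := by
  rw [← Finset.sum_add_distrib, ← Finset.sum_sub_distrib]
  refine Finset.sum_congr rfl fun s _ => ?_
  rw [Finset.mul_sum]
  simp only [advFn]
  have e : ∀ a : A, d s * (π s a * (r s a + (∑ s', P s a s' * valueFn P r πold h s')
        - valueFn P r πold (h + 1) s))
      = (d s * π s a * r s a + d s * π s a * ∑ s', P s a s' * valueFn P r πold h s')
        - d s * π s a * valueFn P r πold (h + 1) s := fun a => by ring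
  rw [Finset.sum_congr rfl fun a _ => e a, Finset.sum_sub_distrib, Finset.sum_add_distrib]
  congr 1
  calc ∑ a, d s * π s a * valueFn P r πold (h + 1) s
      = (∑ a, π s a) * (d s * valueFn P r πold (h + 1) s) := by
        rw [Finset.sum_mul]; exact Finset.sum_congr rfl fun a _ => by ring
    _ = d s * valueFn P r πold (h + 1) s := by rw [hπ s, one_mul]


/-- Performance difference lemma, finite horizon. -/
lemma pdl (P : S → A → S → ℝ) (r : S → A → ℝ) (π πold : S → A → ℝ)
    (hπ : ∀ s, ∑ a, π s a = 1) :
    ∀ (h : ℕ) (d : S → ℝ),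
      ∑ s, d s * valueFn P r π h s - ∑ s, d s * valueFn P r πold h s
        = ∑ t ∈ Finset.range h, ∑ s, stateDist P d π t s *
            ∑ a, π s a * advFn P r πold (h - t - 1) s a := by
  intro h
  induction h with
  | zero => intro d; simp [valueFn]
  | succ h ih =>
    intro d
    set d1 : S → ℝ := fun s'' => ∑ s, ∑ a, d s * π s a * P s a s'' with hd1
    rw [Finset.sum_range_succ']
    have hF0 : ∑ s, stateDist P d π 0 s * ∑ a, π s a * advFn P r πold (h + 1 - 0 - 1) s a
        = ∑ s, d s * ∑ a, π s a * advFn P r πold h s a := by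
      simp [stateDist]
    have hFt : ∑ t ∈ Finset.range h, ∑ s, stateDist P d π (t + 1) s *
          ∑ a, π s a * advFn P r πold (h + 1 - (t + 1) - 1) s a
        = ∑ s, d1 s * valueFn P r π h s - ∑ s, d1 s * valueFn P r πold h s := by
      rw [ih d1]
      refine Finset.sum_congr rfl fun t ht => Finset.sum_congr rfl fun s _ => ?_
      rw [stateDist_shift, show h + 1 - (t + 1) - 1 = h - t - 1 from by omega]
    rw [hF0, hFt]
    have e1 := dist_value_succ P r π d h
    have e2 := dist_adv_exp P r π πold hπ d h
    have e3 : ∑ s, d1 s * valueFn P r π h s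
        = ∑ s, ∑ a, d s * π s a * ∑ s', P s a s' * valueFn P r π h s' :=
      push_exp P d π _
    have e4 : ∑ s, d1 s * valueFn P r πold h s
        = ∑ s, ∑ a, d s * π s a * ∑ s', P s a s' * valueFn P r πold h s' :=
      push_exp P d π _
    rw [e1, e2, e3, e4]
    ring


lemma surr_bound (P : S → A → S → ℝ) (r : S → A → ℝ) (π πold : S → A → ℝ)
    (hπold : ∀ s, ∑ a, πold s a = 1) (α ε : ℝ) (hε0 : 0 ≤ ε)
    (hα : ∀ s, tvDist (π s) (πold s) ≤ α)
    (h : ℕ) (s : S) (hεb : ∀ a, |advFn P r πold h s a| ≤ ε) :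
    |∑ a, π s a * advFn P r πold h s a| ≤ 2 * ε * α := by
  have key : ∑ a, π s a * advFn P r πold h s a
      = ∑ a, (π s a - πold s a) * advFn P r πold h s a := by
    have h0 := adv_self_zero P r πold hπold h s
    have e : (∑ a, (π s a - πold s a) * advFn P r πold h s a)
        = (∑ a, π s a * advFn P r πold h s a) - ∑ a, πold s a * advFn P r πold h s a := by
      rw [← Finset.sum_sub_distrib]
      exact Finset.sum_congr rfl fun a _ => by ring
    rw [e, h0, sub_zero]
  rw [key]
  calc |∑ a, (π s a - πold s a) * advFn P r πold h s a|
      ≤ ∑ a, |(π s a - πold s a) * advFn P r πold h s a| := Finset.abs_sum_le_sum_abs _ _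
    _ ≤ ∑ a, |π s a - πold s a| * ε := by
        refine Finset.sum_le_sum fun a _ => ?_
        rw [abs_mul]
        exact mul_le_mul_of_nonneg_left (hεb a) (abs_nonneg _)
    _ = 2 * ε * tvDist (π s) (πold s) := by rw [tvDist, ← Finset.sum_mul]; ring
    _ ≤ 2 * ε * α := by
        refine mul_le_mul_of_nonneg_left (hα s) (by positivity)

lemma stateDist_tv (P : S → A → S → ℝ) (ρ : S → ℝ) (π πold : S → A → ℝ)
    (hP : ∀ s a, (∀ s', 0 ≤ P s a s') ∧ ∑ s', P s a s' = 1)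
    (hρ : (∀ s, 0 ≤ ρ s) ∧ ∑ s, ρ s = 1)
    (hπ : ∀ s, (∀ a, 0 ≤ π s a) ∧ ∑ a, π s a = 1)
    (hπold : ∀ s, (∀ a, 0 ≤ πold s a) ∧ ∑ a, πold s a = 1)
    (α : ℝ) (hα : ∀ s, tvDist (π s) (πold s) ≤ α) :
    ∀ t, ∑ s, |stateDist P ρ π t s - stateDist P ρ πold t s| ≤ 2 * t * α := by
  intro t
  induction t with
  | zero => simp [stateDist]
  | succ t ih =>
    have hon := stateDist_nonneg P ρ πold (fun s a s' => (hP s a).1 s') hρ.1 (fun s a => (hπold s).1 a)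
    have hos := stateDist_sum_one P ρ πold (fun s a => (hP s a).2) hρ.2 (fun s => (hπold s).2)
    calc ∑ s', |stateDist P ρ π (t+1) s' - stateDist P ρ πold (t+1) s'|
        = ∑ s', |∑ s, ∑ a, (stateDist P ρ π t s * π s a - stateDist P ρ πold t s * πold s a) * P s a s'| := by
          refine Finset.sum_congr rfl fun s' _ => ?_
          congr 1
          show stateDist P ρ π (t+1) s' - stateDist P ρ πold (t+1) s' = _
          simp only [stateDist]
          rw [← Finset.sum_sub_distrib]
          refine Finset.sum_congr rfl fun s _ => ?_
          rw [← Finset.sum_sub_distrib]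
          exact Finset.sum_congr rfl fun a _ => by ring
      _ ≤ ∑ s', ∑ s, ∑ a, |stateDist P ρ π t s * π s a - stateDist P ρ πold t s * πold s a| * P s a s' := by
          refine Finset.sum_le_sum fun s' _ => ?_
          calc |∑ s, ∑ a, (stateDist P ρ π t s * π s a - stateDist P ρ πold t s * πold s a) * P s a s'|
              ≤ ∑ s, |∑ a, (stateDist P ρ π t s * π s a - stateDist P ρ πold t s * πold s a) * P s a s'| :=
                Finset.abs_sum_le_sum_abs _ _
            _ ≤ ∑ s, ∑ a, |stateDist P ρ π t s * π s a - stateDist P ρ πold t s * πold s a| * P s a s' := by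
                refine Finset.sum_le_sum fun s _ => ?_
                calc |∑ a, (stateDist P ρ π t s * π s a - stateDist P ρ πold t s * πold s a) * P s a s'|
                    ≤ ∑ a, |(stateDist P ρ π t s * π s a - stateDist P ρ πold t s * πold s a) * P s a s'| :=
                      Finset.abs_sum_le_sum_abs _ _
                  _ ≤ _ := by
                      refine Finset.sum_le_sum fun a _ => ?_
                      rw [abs_mul, abs_of_nonneg ((hP s a).1 s')]
      _ = ∑ s, ∑ a, |stateDist P ρ π t s * π s a - stateDist P ρ πold t s * πold s a| := by
          rw [Finset.sum_comm]
          refine Finset.sum_congr rfl fun s _ => ?_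
          rw [Finset.sum_comm]
          refine Finset.sum_congr rfl fun a _ => ?_
          rw [← Finset.mul_sum, (hP s a).2, mul_one]
      _ ≤ ∑ s, (|stateDist P ρ π t s - stateDist P ρ πold t s| + stateDist P ρ πold t s * (2 * α)) := by
          refine Finset.sum_le_sum fun s _ => ?_
          calc ∑ a, |stateDist P ρ π t s * π s a - stateDist P ρ πold t s * πold s a|
              ≤ ∑ a, (|stateDist P ρ π t s - stateDist P ρ πold t s| * π s a
                  + stateDist P ρ πold t s * |π s a - πold s a|) := by
                refine Finset.sum_le_sum fun a _ => ?_
                have : stateDist P ρ π t s * π s a - stateDist P ρ πold t s * πold s a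
                    = (stateDist P ρ π t s - stateDist P ρ πold t s) * π s a
                      + stateDist P ρ πold t s * (π s a - πold s a) := by ring
                rw [this]
                calc |_ + _| ≤ |(stateDist P ρ π t s - stateDist P ρ πold t s) * π s a|
                      + |stateDist P ρ πold t s * (π s a - πold s a)| := abs_add_le _ _
                  _ = _ := by
                      rw [abs_mul, abs_mul, abs_of_nonneg ((hπ s).1 a), abs_of_nonneg (hon t s)]
              _ = |stateDist P ρ π t s - stateDist P ρ πold t s|
                  + stateDist P ρ πold t s * (2 * tvDist (π s) (πold s)) := by
                rw [Finset.sum_add_distrib, ← Finset.mul_sum, (hπ s).2, mul_one,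
                  ← Finset.mul_sum, tvDist]
                ring
              _ ≤ _ := by
                refine add_le_add_right (mul_le_mul_of_nonneg_left ?_ (hon t s)) _
                have := hα s
                linarith
      _ = (∑ s, |stateDist P ρ π t s - stateDist P ρ πold t s|) + 2 * α := by
          rw [Finset.sum_add_distrib, ← Finset.sum_mul, hos t, one_mul]
      _ ≤ 2 * t * α + 2 * α := by linarith
      _ = 2 * (t + 1 : ℕ) * α := by push_cast; ring


end Aux

/-- Finite-horizon undiscounted TRPO surrogate bound: with
`L_{πold}(π) = J(πold) + ∑_{t<T} E_{s∼d_t^{πold}} E_{a∼π(·|s)}[A_{πold}(s,a)]`, the gap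
`|J(π) − L_{πold}(π)|` is at most `4T(T−1)εα²`, where `α = max_s D_TV(π(·|s),πold(·|s))`
and `ε` bounds the advantage magnitudes, for per-trajectory returns in `[0,1]`. -/
theorem trpo_finite_horizon_bound [Fintype S] [Fintype A]
    (P : S → A → S → ℝ) (r : S → A → ℝ) (ρ : S → ℝ) (T : ℕ)
    (hP : ∀ s a, (∀ s', 0 ≤ P s a s') ∧ ∑ s', P s a s' = 1)
    (hρ : (∀ s, 0 ≤ ρ s) ∧ ∑ s, ρ s = 1)
    (hr : ∀ s a, 0 ≤ r s a)
    (hret : ∀ (ss : ℕ → S) (as : ℕ → A), ∑ t ∈ Finset.range T, r (ss t) (as t) ≤ 1)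
    (π πold : S → A → ℝ)
    (hπ : ∀ s, (∀ a, 0 ≤ π s a) ∧ ∑ a, π s a = 1)
    (hπold : ∀ s, (∀ a, 0 ≤ πold s a) ∧ ∑ a, πold s a = 1)
    (α ε : ℝ)
    (hα : ∀ s, tvDist (π s) (πold s) ≤ α)
    (hε : ∀ h s a, h < T → |advFn P r πold h s a| ≤ ε) :
    |expReturn P r ρ T π -
        (expReturn P r ρ T πold +
          ∑ t ∈ Finset.range T, ∑ s, stateDist P ρ πold t s *
            ∑ a, π s a * advFn P r πold (T - t - 1) s a)| ≤
      4 * T * (T - 1) * ε * α ^ 2 := by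
  rcases isEmpty_or_nonempty S with hSe | hSne
  · exact absurd hρ.2 (by simp [Finset.univ_eq_empty])
  rcases Nat.eq_zero_or_pos T with rfl | hT
  · simp [expReturn, valueFn]
  obtain ⟨T', rfl⟩ : ∃ T', T = T' + 1 := ⟨T - 1, by omega⟩
  set T : ℕ := T' + 1 with hTdef
  have s0 : S := Classical.arbitrary S
  have hAne : Nonempty A := by
    rcases isEmpty_or_nonempty A with hAe | h
    · exact absurd (hπ s0).2 (by simp [Finset.univ_eq_empty])
    · exact h
  obtain ⟨a0⟩ := hAne
  have hα0 : 0 ≤ α := le_trans (by unfold tvDist; positivity) (hα s0)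
  have hε0 : 0 ≤ ε := le_trans (abs_nonneg _) (hε 0 s0 a0 hT)
  have hpdl := pdl P r π πold (fun s => (hπ s).2) T ρ
  have hgap : expReturn P r ρ T π -
        (expReturn P r ρ T πold +
          ∑ t ∈ Finset.range T, ∑ s, stateDist P ρ πold t s *
            ∑ a, π s a * advFn P r πold (T - t - 1) s a)
      = ∑ t ∈ Finset.range T, ∑ s,
          (stateDist P ρ π t s - stateDist P ρ πold t s) *
            ∑ a, π s a * advFn P r πold (T - t - 1) s a := by
    rw [show ∀ x y z : ℝ, x - (y + z) = (x - y) - z from fun x y z => by ring]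
    unfold expReturn
    rw [hpdl, ← Finset.sum_sub_distrib]
    refine Finset.sum_congr rfl fun t _ => ?_
    rw [← Finset.sum_sub_distrib]
    exact Finset.sum_congr rfl fun s _ => by ring
  rw [hgap]
  have htv := stateDist_tv P ρ π πold hP hρ hπ hπold α hα
  have hgb : ∀ t ∈ Finset.range T, ∀ s : S,
      |∑ a, π s a * advFn P r πold (T - t - 1) s a| ≤ 2 * ε * α := by
    intro t ht s
    refine surr_bound P r π πold (fun s => (hπold s).2) α ε hε0 hα _ s fun a => ?_
    exact hε (T - t - 1) s a (by omega)
  have step : |∑ t ∈ Finset.range T, ∑ s,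
        (stateDist P ρ π t s - stateDist P ρ πold t s) *
          ∑ a, π s a * advFn P r πold (T - t - 1) s a|
      ≤ ∑ t ∈ Finset.range T, 2 * t * α * (2 * ε * α) := by
    calc |∑ t ∈ Finset.range T, ∑ s,
          (stateDist P ρ π t s - stateDist P ρ πold t s) *
            ∑ a, π s a * advFn P r πold (T - t - 1) s a|
        ≤ ∑ t ∈ Finset.range T, |∑ s,
            (stateDist P ρ π t s - stateDist P ρ πold t s) *
              ∑ a, π s a * advFn P r πold (T - t - 1) s a| :=
          Finset.abs_sum_le_sum_abs _ _
      _ ≤ ∑ t ∈ Finset.range T, 2 * t * α * (2 * ε * α) := by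
          refine Finset.sum_le_sum fun t ht => ?_
          calc |∑ s, (stateDist P ρ π t s - stateDist P ρ πold t s) *
                ∑ a, π s a * advFn P r πold (T - t - 1) s a|
              ≤ ∑ s, |(stateDist P ρ π t s - stateDist P ρ πold t s) *
                  ∑ a, π s a * advFn P r πold (T - t - 1) s a| :=
                Finset.abs_sum_le_sum_abs _ _
            _ ≤ ∑ s, |stateDist P ρ π t s - stateDist P ρ πold t s| * (2 * ε * α) := by
                refine Finset.sum_le_sum fun s _ => ?_
                rw [abs_mul]
                exact mul_le_mul_of_nonneg_left (hgb t ht s) (abs_nonneg _)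
            _ = (∑ s, |stateDist P ρ π t s - stateDist P ρ πold t s|) * (2 * ε * α) := by
                rw [Finset.sum_mul]
            _ ≤ 2 * t * α * (2 * ε * α) :=
                mul_le_mul_of_nonneg_right (htv t) (by positivity)
  refine le_trans step ?_
  have hsum : (∑ t ∈ Finset.range T, (t : ℝ)) = T' * (T' + 1) / 2 := by
    have h2 := Finset.sum_range_id_mul_two T
    have h3 : ((∑ i ∈ Finset.range T, i : ℕ) : ℝ) * 2 = (T' + 1) * T' := by
      exact_mod_cast congrArg (Nat.cast : ℕ → ℝ) h2
    push_cast at h3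
    push_cast
    linarith
  have : ∑ t ∈ Finset.range T, 2 * (t : ℝ) * α * (2 * ε * α)
      = 4 * ε * α ^ 2 * ∑ t ∈ Finset.range T, (t : ℝ) := by
    rw [Finset.mul_sum]
    exact Finset.sum_congr rfl fun t _ => by ring
  rw [this, hsum]
  have hcast : ((T : ℕ) : ℝ) - 1 = (T' : ℝ) := by rw [hTdef]; push_cast; ring
  rw [hcast]
  have hnn : 0 ≤ (T' : ℝ) * (T' + 1) * ε * α ^ 2 := by positivity
  push_cast
  nlinarith [hnn]
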